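/- The set S₃ is free of local redundancy with respect to Bob's qubit–qutrit decomposition: writing Bob's ℂ⁶ as ℂ²⊗ℂ³ via |0⟩=|00⟩, |1⟩=|01⟩, |2⟩=|02⟩, |3⟩=|10⟩, |4⟩=|11⟩, |5⟩=|12⟩, the reduced states of |φ₃⟩ = (|1⟩−|2⟩)⊗(|0⟩−|4⟩) and |φ₄⟩ = (|0⟩−|1⟩)⊗(|2⟩−|3⟩) obtained by tracing out Bob's qutrit subsystem (equivalently, their partial inner product over the qutrit factor) are non-orthogonal: tracing out b₂ from |φ₃⟩⟨φ₃| and |φ₄⟩⟨φ₄| yields operators ρ₃, ρ₄ on ℂ⁶(Alice)⊗ℂ²(b₁) with Tr(ρ₃ρ₄) ≠ 0. -/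
import Mathlib


open scoped BigOperators

noncomputable section

def e6 (i : Fin 6) : Fin 6 → ℂ := fun j => if j = i then 1 else 0

/-- Bob's factor of `|φ₃⟩` in the qubit–qutrit splitting: `|00⟩ − |11⟩`. -/
def bv3 : Fin 2 × Fin 3 → ℂ :=
  fun y => (if y = (0, 0) then (1 : ℂ) else 0) - (if y = (1, 1) then 1 else 0)

/-- Bob's factor of `|φ₄⟩` in the qubit–qutrit splitting: `|02⟩ − |10⟩`. -/
def bv4 : Fin 2 × Fin 3 → ℂ :=
  fun y => (if y = (0, 2) then (1 : ℂ) else 0) - (if y = (1, 0) then 1 else 0)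

/-- `|φ₃⟩ = (|1⟩−|2⟩)_A ⊗ (|00⟩−|11⟩)_{b₁b₂}` in ℂ⁶⊗ℂ²⊗ℂ³. -/
def φ3 : Fin 6 × Fin 2 × Fin 3 → ℂ := fun x => (e6 1 - e6 2) x.1 * bv3 x.2

/-- `|φ₄⟩ = (|0⟩−|1⟩)_A ⊗ (|02⟩−|10⟩)_{b₁b₂}` in ℂ⁶⊗ℂ²⊗ℂ³. -/
def φ4 : Fin 6 × Fin 2 × Fin 3 → ℂ := fun x => (e6 0 - e6 1) x.1 * bv4 x.2

/-- Partial trace of `|φ⟩⟨φ|` over Bob's qutrit subsystem `b₂`, yielding an operator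
on ℂ⁶(Alice)⊗ℂ²(b₁). -/
def red (φ : Fin 6 × Fin 2 × Fin 3 → ℂ) :
    Matrix (Fin 6 × Fin 2) (Fin 6 × Fin 2) ℂ :=
  fun x y => ∑ k : Fin 3, φ (x.1, x.2, k) * star (φ (y.1, y.2, k))

/-- the reduced states `ρ₃ = Tr_{b₂}|φ₃⟩⟨φ₃|` and `ρ₄ = Tr_{b₂}|φ₄⟩⟨φ₄|`
are non-orthogonal: `Tr(ρ₃ρ₄) ≠ 0`; this is the local irredundancy of `S₃` with respect
to Bob's qubit–qutrit decomposition. -/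
theorem stmt17 : (red φ3 * red φ4).trace ≠ 0 := by
  have : (red φ3 * red φ4).trace = 2 := by
    simp only [Matrix.trace, Matrix.diag, Matrix.mul_apply, red, φ3, φ4, e6, bv3, bv4,
      Fintype.sum_prod_type, Fin.sum_univ_succ, Fin.sum_univ_zero, Pi.sub_apply,
      Prod.mk.injEq, map_sub, map_one, map_zero, apply_ite (starRingEnd ℂ)]
    norm_num [Fin.ext_iff]
  rw [this]; exact two_ne_zero

end
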